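/- Let F be a field and A an F-linear abelian semisimple category. An F-linear functor Φ : A → Vec_F is corepresentable if and only if its support (the set of isomorphism classes of simple objects S with Φ(S) ≠ 0) is finite and dim_F Φ(S) < ∞ for every simple object S. -/

import Mathlib

set_option linter.unusedSectionVars false
open CategoryTheory CategoryTheory.Limits Opposite

section Aux

variable {F : Type} [Field F] {A : Type} [Category.{0} A]
    [Preadditive A] [Linear F A] [Abelian A] [HasFiniteBiproducts A]

/-- transfer `Subsingleton` of values of `Φ` along an isomorphism. -/
lemma auxSubsingleton (Φ : A ⥤ ModuleCat.{0} F) {X Y : A} (i : X ≅ Y)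
    (h : Subsingleton (Φ.obj Y)) : Subsingleton (Φ.obj X) := by
  constructor
  intro a b
  have ha : ∀ v : Φ.obj X, Φ.map i.inv (Φ.map i.hom v) = v := by
    intro v
    have h2 : Φ.map (i.hom ≫ i.inv) v = Φ.map i.inv (Φ.map i.hom v) := by
      rw [Φ.map_comp]; rfl
    rw [← h2, Iso.hom_inv_id, Φ.map_id]; rfl
  rw [← ha a, ← ha b, Subsingleton.elim (Φ.map i.hom a) (Φ.map i.hom b)]

lemma auxSub {M N : ModuleCat.{0} F} (e : M ≅ N) (h : Subsingleton N) : Subsingleton M := by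
  constructor
  intro a b
  have ha : ∀ v : M, e.inv (e.hom v) = v := fun v => by
    have : (e.hom ≫ e.inv) v = v := by rw [Iso.hom_inv_id]; rfl
    exact this
  rw [← ha a, ← ha b, Subsingleton.elim (e.hom a) (e.hom b)]

lemma auxIsIso {M N : ModuleCat.{0} F} (f : M ⟶ N) (hf : Function.Bijective f) : IsIso f := by
  let e := LinearEquiv.ofBijective f.hom hf
  exact ⟨ModuleCat.ofHom e.symm.toLinearMap, by ext v; exact e.symm_apply_apply v,
    by ext v; exact e.apply_symm_apply v⟩

/-- existence of a "basis" of `Φ.obj T` over `End T`, stated without module structures. -/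
lemma auxBasis (Φ : A ⥤ ModuleCat.{0} F) [Φ.Additive] [Φ.Linear F] (T : A) [Simple T]
    [FiniteDimensional F (Φ.obj T)] :
    ∃ (m : ℕ) (b : Fin m → Φ.obj T),
      (∀ d : Fin m → End T, (∑ j, Φ.map (d j) (b j)) = 0 → ∀ j, d j = 0) ∧
      (∀ y : Φ.obj T, ∃ d : Fin m → End T, y = ∑ j, Φ.map (d j) (b j)) := by
  letI : Module (End T) (Φ.obj T) :=
    { smul := fun d v => Φ.map d v
      one_smul := fun v => by
        show Φ.map (𝟙 T) v = v
        rw [Φ.map_id]; rfl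
      mul_smul := fun d d' v => by
        show Φ.map (d' ≫ d) v = Φ.map d (Φ.map d' v)
        rw [Φ.map_comp]; rfl
      smul_zero := fun d => map_zero _
      smul_add := fun d v w => map_add _ v w
      add_smul := fun d d' v => by
        show Φ.map (d + d') v = Φ.map d v + Φ.map d' v
        rw [Φ.map_add]; rfl
      zero_smul := fun v => by
        show Φ.map (0 : T ⟶ T) v = 0
        rw [Φ.map_zero]; rfl }
  have hsmul : ∀ (d : End T) (v : Φ.obj T), d • v = Φ.map d v := fun _ _ => rfl
  letI : IsScalarTower F (End T) (Φ.obj T) :=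
    ⟨fun c d v => by
      rw [hsmul, hsmul]
      show Φ.map (c • d) v = c • Φ.map d v
      rw [Φ.map_smul]; rfl⟩
  haveI : Module.Finite (End T) (Φ.obj T) :=
    Module.Finite.of_restrictScalars_finite F (End T) (Φ.obj T)
  haveI : Fintype (Module.Basis.ofVectorSpaceIndex (End T) (Φ.obj T)) :=
    FiniteDimensional.fintypeBasisIndex (Module.Basis.ofVectorSpace (End T) (Φ.obj T))
  let e := Fintype.equivFin (Module.Basis.ofVectorSpaceIndex (End T) (Φ.obj T))
  let B := (Module.Basis.ofVectorSpace (End T) (Φ.obj T)).reindex e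
  refine ⟨Fintype.card (Module.Basis.ofVectorSpaceIndex (End T) (Φ.obj T)), fun j => B j, ?_, ?_⟩
  · intro d hd j
    refine Fintype.linearIndependent_iff.mp B.linearIndependent d ?_ j
    rw [← hd]
    exact Finset.sum_congr rfl fun j _ => (hsmul _ _)
  · intro y
    refine ⟨fun j => B.repr y j, ?_⟩
    conv_lhs => rw [← B.sum_repr y]
    exact Finset.sum_congr rfl fun j _ => (hsmul _ _)

variable (Φ : A ⥤ ModuleCat.{0} F) [Φ.Additive] [Φ.Linear F]

/-- The natural map `Hom(N, -) → Φ` determined by an element `x : Φ.obj N`. -/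
noncomputable def etaApp (N : A) (x : Φ.obj N) (X : A) :
    ((linearCoyoneda F A).obj (op N)).obj X ⟶ Φ.obj X := ModuleCat.ofHom
  { toFun := fun f => Φ.map f x
    map_add' := fun f g => by
      show Φ.map (f + g) x = _
      rw [Φ.map_add]; rfl
    map_smul' := fun c f => by
      show Φ.map (c • f) x = _
      rw [Φ.map_smul]; rfl }

lemma etaApp_apply (N : A) (x : Φ.obj N) (X : A) (f : N ⟶ X) :
    etaApp Φ N x X f = Φ.map f x := rfl

/-- The natural transformation `Hom(N, -) ⟶ Φ` determined by `x : Φ.obj N`. -/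
noncomputable def eta (N : A) (x : Φ.obj N) : (linearCoyoneda F A).obj (op N) ⟶ Φ where
  app X := etaApp Φ N x X
  naturality X Y g := by
    ext (f : N ⟶ X)
    show etaApp Φ N x Y (f ≫ g) = Φ.map g (etaApp Φ N x X f)
    rw [etaApp_apply, etaApp_apply, Φ.map_comp]; rfl

lemma hcomp {P Q R' : A} (g : P ⟶ Q) (h : Q ⟶ R') (v : Φ.obj P) :
    Φ.map (g ≫ h) v = Φ.map h (Φ.map g v) := by
  rw [Φ.map_comp]; rfl

end Aux

/-- Let `F` be a field and `A` an `F`-linear abelian semisimple category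
(pseudo-abelian, every object a finite direct sum of simple objects, with finite-dimensional
Hom-spaces).  An `F`-linear functor `Φ : A ⥤ Vec_F` is corepresentable if and only if its
support (the isomorphism classes of simple objects `S` with `Φ S ≠ 0`) is finite and
`dim_F Φ(S) < ∞` for every simple `S`. -/
theorem stmt0 {F : Type} [Field F] {A : Type} [Category.{0} A]
    [Preadditive A] [Linear F A] [Abelian A] [HasFiniteBiproducts A]
    (hsemisimple : ∀ X : A, ∃ (n : ℕ) (f : Fin n → A),
      (∀ i, Simple (f i)) ∧ Nonempty (X ≅ ⨁ f))
    (hfin : ∀ X Y : A, FiniteDimensional F (X ⟶ Y))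
    (Φ : A ⥤ ModuleCat.{0} F) [Φ.Additive] [Φ.Linear F] :
    (∃ N : A, Nonempty (Φ ≅ (linearCoyoneda F A).obj (op N))) ↔
      ((∃ s : Finset A, ∀ S : A, Simple S → ¬ Subsingleton (Φ.obj S) →
          ∃ T ∈ s, Nonempty (S ≅ T)) ∧
        ∀ S : A, Simple S → FiniteDimensional F (Φ.obj S)) := by
  classical
  constructor
  · rintro ⟨N, ⟨i⟩⟩
    obtain ⟨n, f, hsimp, ⟨eN⟩⟩ := hsemisimple N
    constructor
    · refine ⟨Finset.image f Finset.univ, ?_⟩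
      intro S hS hns
      haveI := hS
      have hns' : ¬ Subsingleton (N ⟶ S) := by
        intro h
        have h' : Subsingleton (((linearCoyoneda F A).obj (op N)).obj S) := h
        exact hns (auxSub (i.app S) h')
      have : Nontrivial (N ⟶ S) := not_subsingleton_iff_nontrivial.mp hns'
      obtain ⟨g, hg⟩ := exists_ne (0 : N ⟶ S)
      have hh : eN.hom ≫ (eN.inv ≫ g) = g := by simp
      have hne : ¬ ∀ j, biproduct.ι f j ≫ (eN.inv ≫ g) = 0 := by
        intro w
        apply hg
        rw [← hh, biproduct.hom_ext' (eN.inv ≫ g) 0 (fun j => by rw [w j, comp_zero]),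
          comp_zero]
      push_neg at hne
      obtain ⟨j, hj⟩ := hne
      haveI := hsimp j
      haveI : IsIso (biproduct.ι f j ≫ (eN.inv ≫ g)) := isIso_of_hom_simple hj
      exact ⟨f j, Finset.mem_image.mpr ⟨j, Finset.mem_univ j, rfl⟩,
        ⟨(asIso (biproduct.ι f j ≫ (eN.inv ≫ g))).symm⟩⟩
    · intro S hS
      haveI := hS
      haveI : FiniteDimensional F (((linearCoyoneda F A).obj (op N)).obj S) := hfin N S
      let e : (Φ.obj S) ≃ₗ[F] (((linearCoyoneda F A).obj (op N)).obj S) :=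
        { toLinearMap := (i.hom.app S).hom
          invFun := i.inv.app S
          left_inv := fun v => by
            have : (i.hom.app S ≫ i.inv.app S) v = v := by
              rw [Iso.hom_inv_id_app]; rfl
            exact this
          right_inv := fun v => by
            have : (i.inv.app S ≫ i.hom.app S) v = v := by
              rw [Iso.inv_hom_id_app]; rfl
            exact this }
      exact Module.Finite.equiv e.symm
  · rintro ⟨⟨s, hs⟩, hd⟩
    -- representatives of isomorphism classes in the support
    let u : Finset (Quotient (isIsomorphicSetoid A)) :=
      (s.image (Quotient.mk (isIsomorphicSetoid A))).filter
        (fun q => Simple q.out ∧ ¬ Subsingleton (Φ.obj q.out))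
    have key : ∀ q : {q // q ∈ u}, ∃ (m : ℕ) (b : Fin m → Φ.obj (q.1.out)),
        (∀ d : Fin m → End (q.1.out), (∑ j, Φ.map (d j) (b j)) = 0 → ∀ j, d j = 0) ∧
        (∀ y : Φ.obj (q.1.out), ∃ d : Fin m → End (q.1.out),
          y = ∑ j, Φ.map (d j) (b j)) := by
      intro q
      obtain ⟨-, h1, h2⟩ := Finset.mem_filter.mp q.2
      haveI := h1
      haveI : FiniteDimensional F (Φ.obj (q.1.out)) := hd _ h1
      exact auxBasis Φ _
    choose m b hb1 hb2 using key
    let I : Type := Σ q : {q // q ∈ u}, Fin (m q)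
    let obj : I → A := fun p => p.1.1.out
    have hsimp : ∀ p : I, Simple (obj p) := fun p => (Finset.mem_filter.mp p.1.2).2.1
    have hnsub : ∀ p : I, ¬ Subsingleton (Φ.obj (obj p)) :=
      fun p => (Finset.mem_filter.mp p.1.2).2.2
    let N : A := ⨁ obj
    let x : Φ.obj N := ∑ p : I, Φ.map (biproduct.ι obj p) (b p.1 p.2)
    -- value of `x` under projections
    have hx_pi : ∀ p : I, Φ.map (biproduct.π obj p) x = b p.1 p.2 := by
      intro p
      show Φ.map (biproduct.π obj p) (∑ p' : I, Φ.map (biproduct.ι obj p') (b p'.1 p'.2)) = _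
      rw [map_sum, Finset.sum_eq_single p]
      · rw [← hcomp, biproduct.ι_π_self, Φ.map_id]; rfl
      · intro p' _ hne
        rw [← hcomp, biproduct.ι_π_ne obj hne, Φ.map_zero]; rfl
      · intro h; exact absurd (Finset.mem_univ p) h
    have happ : ∀ (X : A) (g : N ⟶ X),
        etaApp Φ N x X g = ∑ p : I, Φ.map (biproduct.ι obj p ≫ g) (b p.1 p.2) := by
      intro X g
      rw [etaApp_apply]
      show Φ.map g (∑ p : I, Φ.map (biproduct.ι obj p) (b p.1 p.2)) = _
      rw [map_sum]
      exact Finset.sum_congr rfl fun p _ => (hcomp Φ _ _ _).symm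
    -- bijectivity on simple objects with trivial value
    have case1 : ∀ X : A, Simple X → Subsingleton (Φ.obj X) →
        Function.Bijective (etaApp Φ N x X) := by
      intro X hX hsub
      haveI := hX
      have hzero : ∀ g : N ⟶ X, g = 0 := by
        intro g
        refine biproduct.hom_ext' _ _ fun p => ?_
        rw [comp_zero]
        by_contra hne
        haveI := hsimp p
        haveI : IsIso (biproduct.ι obj p ≫ g) := isIso_of_hom_simple hne
        exact hnsub p (auxSubsingleton Φ (asIso (biproduct.ι obj p ≫ g)) hsub)
      constructor
      · intro a b' _
        exact (hzero a).trans (hzero b').symm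
      · intro y
        exact ⟨0, (@Subsingleton.elim _ hsub _ y)⟩
    -- bijectivity on simple objects with nontrivial value
    have case2 : ∀ X : A, Simple X → ¬ Subsingleton (Φ.obj X) →
        Function.Bijective (etaApp Φ N x X) := by
      intro X hX hnsubX
      haveI := hX
      obtain ⟨T, hTs, ⟨iXT⟩⟩ := hs X hX hnsubX
      have h0 : (isIsomorphicSetoid A) (⟦X⟧ : Quotient (isIsomorphicSetoid A)).out X :=
        Quotient.mk_out X
      obtain ⟨e0⟩ : Nonempty ((⟦X⟧ : Quotient (isIsomorphicSetoid A)).out ≅ X) := h0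
      have hmem : (⟦X⟧ : Quotient (isIsomorphicSetoid A)) ∈ u := by
        refine Finset.mem_filter.mpr
          ⟨Finset.mem_image.mpr ⟨T, hTs, Quotient.sound ⟨iXT.symm⟩⟩,
            Simple.of_iso e0, fun h => hnsubX (auxSubsingleton Φ e0.symm h)⟩
      let q0 : {q // q ∈ u} := ⟨⟦X⟧, hmem⟩
      have hcomp_ne : ∀ p : I, p.1 ≠ q0 → ∀ h : obj p ⟶ X, h = 0 := by
        intro p hp h
        by_contra hne
        haveI := hsimp p
        haveI : IsIso h := isIso_of_hom_simple hne
        apply hp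
        apply Subtype.ext
        have h2 : (⟦obj p⟧ : Quotient (isIsomorphicSetoid A)) = ⟦X⟧ :=
          Quotient.sound ⟨asIso h⟩
        show p.1.1 = (⟦X⟧ : Quotient (isIsomorphicSetoid A))
        conv_lhs => rw [← Quotient.out_eq p.1.1]
        exact h2
      have hformula : ∀ g : N ⟶ X,
          etaApp Φ N x X g = Φ.map e0.hom (∑ j : Fin (m q0),
            Φ.map ((biproduct.ι obj ⟨q0, j⟩ ≫ g) ≫ e0.inv) (b q0 j)) := by
        intro g
        rw [happ X g, map_sum, ← Finset.univ_sigma_univ, Finset.sum_sigma,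
          Finset.sum_eq_single q0]
        · refine Finset.sum_congr rfl fun j _ => ?_
          rw [← hcomp]
          congr 1
          simp
        · intro q _ hq
          refine Finset.sum_eq_zero fun j _ => ?_
          have hz := hcomp_ne ⟨q, j⟩ hq (biproduct.ι obj ⟨q, j⟩ ≫ g)
          rw [hz, Φ.map_zero]; rfl
        · intro h; exact absurd (Finset.mem_univ q0) h
      constructor
      · rw [injective_iff_map_eq_zero]
        intro g hg
        change N ⟶ X at g
        rw [hformula g] at hg
        set z := ∑ j : Fin (m q0),
          Φ.map ((biproduct.ι obj ⟨q0, j⟩ ≫ g) ≫ e0.inv) (b q0 j) with hz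
        have h1 : z = 0 := by
          have c1 : z = Φ.map e0.inv (Φ.map e0.hom z) := by
            rw [← hcomp, Iso.hom_inv_id, Φ.map_id]; rfl
          rw [c1, hg, map_zero]
        have h2 := hb1 q0 _ h1
        show g = 0
        refine biproduct.hom_ext' _ _ fun p => ?_
        rw [comp_zero]
        by_cases hp : p.1 = q0
        · obtain ⟨q, j⟩ := p
          have hq : q = q0 := hp
          subst hq
          have h3 : biproduct.ι obj ⟨q0, j⟩ ≫ g =
              ((biproduct.ι obj ⟨q0, j⟩ ≫ g) ≫ e0.inv) ≫ e0.hom := by simp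
          rw [h3, h2 j, zero_comp]
        · exact hcomp_ne p hp _
      · intro y
        obtain ⟨d, hdy⟩ := hb2 q0 (Φ.map e0.inv y)
        refine ⟨(∑ j : Fin (m q0), biproduct.π obj ⟨q0, j⟩ ≫ (d j ≫ e0.hom) : N ⟶ X), ?_⟩
        show Φ.map _ x = y
        rw [Functor.map_sum]
        have c0 : (∑ j : Fin (m q0),
            Φ.map (biproduct.π obj ⟨q0, j⟩ ≫ (d j ≫ e0.hom))) x =
            ∑ j : Fin (m q0),
              Φ.map (biproduct.π obj ⟨q0, j⟩ ≫ (d j ≫ e0.hom)) x :=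
          (LinearMap.congr_fun (ModuleCat.hom_sum _ _) x).trans (LinearMap.sum_apply _ _ _)
        rw [c0]
        have c1 : ∀ j : Fin (m q0),
            Φ.map (biproduct.π obj ⟨q0, j⟩ ≫ (d j ≫ e0.hom)) x =
            Φ.map e0.hom (Φ.map (d j) (b q0 j)) := by
          intro j
          rw [hcomp, hx_pi ⟨q0, j⟩, hcomp]
        rw [Finset.sum_congr rfl fun j _ => c1 j, ← map_sum, ← hdy, ← hcomp,
          Iso.inv_hom_id, Φ.map_id]; rfl
    have casesimple : ∀ X : A, Simple X → Function.Bijective (etaApp Φ N x X) := by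
      intro X hX
      by_cases h : Subsingleton (Φ.obj X)
      exacts [case1 X hX h, case2 X hX h]
    -- bijectivity on biproducts of simples
    have casesum : ∀ (k : ℕ) (f : Fin k → A), (∀ i, Simple (f i)) →
        Function.Bijective (etaApp Φ N x (⨁ f)) := by
      intro k f hf
      have hcomponent := fun i => casesimple (f i) (hf i)
      constructor
      · rw [injective_iff_map_eq_zero]
        intro g hg
        change N ⟶ ⨁ f at g
        rw [etaApp_apply] at hg
        show g = 0
        refine biproduct.hom_ext _ _ fun j => ?_
        rw [zero_comp]
        refine (injective_iff_map_eq_zero (etaApp Φ N x (f j)).hom).mp (hcomponent j).1 _ ?_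
        rw [etaApp_apply, hcomp, hg, map_zero]
      · intro y
        choose g hgy using fun j => (hcomponent j).2 (Φ.map (biproduct.π f j) y)
        change ∀ j, N ⟶ f j at g
        refine ⟨biproduct.lift g, ?_⟩
        rw [etaApp_apply]
        have c2 : ∀ (v : Φ.obj (⨁ f)), v = ∑ j : Fin k,
            Φ.map (biproduct.ι f j) (Φ.map (biproduct.π f j) v) := by
          intro v
          calc v = Φ.map (𝟙 (⨁ f)) v := by rw [Φ.map_id]; rfl
            _ = Φ.map (∑ j : Fin k, biproduct.π f j ≫ biproduct.ι f j) v := by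
                rw [biproduct.total]
            _ = ∑ j : Fin k, Φ.map (biproduct.π f j ≫ biproduct.ι f j) v := by
                rw [Functor.map_sum]; exact (LinearMap.congr_fun (ModuleCat.hom_sum _ _) v).trans (LinearMap.sum_apply _ _ _)
            _ = ∑ j : Fin k, Φ.map (biproduct.ι f j) (Φ.map (biproduct.π f j) v) :=
                Finset.sum_congr rfl fun j _ => hcomp Φ _ _ _
        calc Φ.map (biproduct.lift g) x
            = ∑ j : Fin k, Φ.map (biproduct.ι f j)
                (Φ.map (biproduct.π f j) (Φ.map (biproduct.lift g) x)) := c2 _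
          _ = ∑ j : Fin k, Φ.map (biproduct.ι f j) (Φ.map (biproduct.π f j) y) := by
              refine Finset.sum_congr rfl fun j _ => ?_
              congr 1
              have c4 : Φ.map (biproduct.π f j) (Φ.map (biproduct.lift g) x) =
                  Φ.map (g j) x := by
                rw [← hcomp, biproduct.lift_π]
              rw [c4, show Φ.map (g j) x = etaApp Φ N x (f j) (g j) from rfl, hgy j]
          _ = y := (c2 y).symm
    -- bijectivity everywhere
    have hbij : ∀ X : A, Function.Bijective (etaApp Φ N x X) := by
      intro X
      obtain ⟨k, f, hf, ⟨eX⟩⟩ := hsemisimple X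
      have h1 := casesum k f hf
      have hfun : ∀ g : N ⟶ X,
          etaApp Φ N x X g = Φ.map eX.inv (etaApp Φ N x (⨁ f) (g ≫ eX.hom)) := by
        intro g
        rw [etaApp_apply, etaApp_apply, ← hcomp]
        congr 1
        simp
      have heq : ⇑(etaApp Φ N x X) = (Φ.map eX.inv) ∘ (etaApp Φ N x (⨁ f)) ∘
          (fun g : N ⟶ X => g ≫ eX.hom) := funext hfun
      rw [heq]
      refine Function.Bijective.comp ?_ (Function.Bijective.comp h1 ?_)
      · refine Function.bijective_iff_has_inverse.mpr
          ⟨Φ.map eX.hom, fun v => ?_, fun v => ?_⟩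
        · show Φ.map eX.hom (Φ.map eX.inv v) = v
          rw [← hcomp, Iso.inv_hom_id, Φ.map_id]; rfl
        · show Φ.map eX.inv (Φ.map eX.hom v) = v
          rw [← hcomp, Iso.hom_inv_id, Φ.map_id]; rfl
      · exact Function.bijective_iff_has_inverse.mpr
          ⟨fun (g : N ⟶ ⨁ f) => g ≫ eX.inv, fun (g : N ⟶ X) => by simp; rfl, fun (g : N ⟶ ⨁ f) => by simp; rfl⟩
    haveI : ∀ X : A, IsIso ((eta Φ N x).app X) := fun X => auxIsIso _ (hbij X)
    haveI : IsIso (eta Φ N x) := NatIso.isIso_of_isIso_app _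
    exact ⟨N, ⟨(asIso (eta Φ N x)).symm⟩⟩
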